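/- Let p, q : ℕ → ℝ be nonincreasing nonnegative summable sequences with entries in [0,1] such that q is majorized by p, i.e., ∑_{i=1}^{k} q i ≤ ∑_{i=1}^{k} p i for all k ∈ ℕ and ∑_{i∈ℕ} q i = ∑_{i∈ℕ} p i. Then for every concave function φ : ℝ → ℝ on [0,1] with φ(0) = 0, assuming φ ∘ p and φ ∘ q are summable, ∑_{i∈ℕ} φ(q i) ≥ ∑_{i∈ℕ} φ(p i). -/

import Mathlib

/-- Secant slopes of a concave function decrease when the interval moves right. -/
lemma concave_slope_le_slope {φ : ℝ → ℝ} (hφ : ConcaveOn ℝ (Set.Icc (0 : ℝ) 1) φ)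
    {a b c d : ℝ} (ha : a ∈ Set.Icc (0:ℝ) 1) (hb : b ∈ Set.Icc (0:ℝ) 1)
    (hc : c ∈ Set.Icc (0:ℝ) 1) (hd : d ∈ Set.Icc (0:ℝ) 1)
    (hab : a < b) (hcd : c < d) (hac : a ≤ c) (hbd : b ≤ d) :
    (φ d - φ c) / (d - c) ≤ (φ b - φ a) / (b - a) := by
  have hconv : ConvexOn ℝ (Set.Icc (0:ℝ) 1) (-φ) := hφ.neg
  have had : a < d := lt_of_le_of_lt hac hcd
  -- step 1 : slope a d ≤ slope a b
  have h1 : ((-φ) b - (-φ) a) / (b - a) ≤ ((-φ) d - (-φ) a) / (d - a) :=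
    hconv.secant_mono ha hb hd (ne_of_gt hab) (ne_of_gt had) hbd
  -- step 2 : slope c d ≤ slope a d  (secants through d)
  have h2 : ((-φ) a - (-φ) d) / (a - d) ≤ ((-φ) c - (-φ) d) / (c - d) :=
    hconv.secant_mono hd ha hc (ne_of_lt had) (ne_of_lt hcd) hac
  have had' : d - a ≠ 0 := ne_of_gt (by linarith)
  have had'' : a - d ≠ 0 := by intro h; apply had'; linarith
  have hcd' : d - c ≠ 0 := ne_of_gt (by linarith)
  have hcd'' : c - d ≠ 0 := by intro h; apply hcd'; linarith
  have e1 : ((-φ) a - (-φ) d) / (a - d) = -((φ d - φ a) / (d - a)) := by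
    simp only [Pi.neg_apply]
    field_simp
    ring
  have e2 : ((-φ) c - (-φ) d) / (c - d) = -((φ d - φ c) / (d - c)) := by
    simp only [Pi.neg_apply]
    field_simp
    ring
  simp only [Pi.neg_apply] at h1 h2 e1 e2
  have h1' : (φ d - φ a) / (d - a) ≤ (φ b - φ a) / (b - a) := by
    have : -((φ b - φ a) / (b - a)) ≤ -((φ d - φ a) / (d - a)) := by
      calc -((φ b - φ a) / (b - a)) = (-φ b - -φ a) / (b - a) := by ring_nf
        _ ≤ (-φ d - -φ a) / (d - a) := h1
        _ = -((φ d - φ a) / (d - a)) := by ring_nf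
    linarith
  have h2' : (φ d - φ c) / (d - c) ≤ (φ d - φ a) / (d - a) := by
    have := h2
    rw [e1, e2] at this
    linarith
  linarith

theorem tsum_concave_ge_of_majorized
    (p q : ℕ → ℝ) (φ : ℝ → ℝ)
    (hp : ∀ i, p i ∈ Set.Icc (0 : ℝ) 1)
    (hq : ∀ i, q i ∈ Set.Icc (0 : ℝ) 1)
    (hpa : Antitone p) (hqa : Antitone q)
    (hps : Summable p) (hqs : Summable q)
    (hmaj : ∀ k, ∑ i ∈ Finset.range k, q i ≤ ∑ i ∈ Finset.range k, p i)
    (htot : ∑' i, q i = ∑' i, p i)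
    (hφ : ConcaveOn ℝ (Set.Icc (0 : ℝ) 1) φ) (hφ0 : φ 0 = 0)
    (hsp : Summable (fun i => φ (p i))) (hsq : Summable (fun i => φ (q i))) :
    ∑' i, φ (p i) ≤ ∑' i, φ (q i) := by
  classical
  set sl : ℝ → ℝ → ℝ := fun a b => (φ b - φ a) / (b - a) with hsl
  set D : ℕ → ℝ := fun k => ∑ i ∈ Finset.range k, (φ (p i) - φ (q i)) with hD
  set S : ℕ → ℝ := fun k => ∑ i ∈ Finset.range k, (p i - q i) with hS
  have hSnn : ∀ k, 0 ≤ S k := by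
    intro k
    have := hmaj k
    simp only [hS, Finset.sum_sub_distrib]
    linarith
  -- Main invariant by induction
  have claim : ∀ k, (∀ i < k, p i = q i) ∨
      ∃ j, j < k ∧ q j < p j ∧ D k ≤ sl (q j) (p j) * S k := by
    intro k
    induction k with
    | zero => exact Or.inl (fun i hi => absurd hi (Nat.not_lt_zero i))
    | succ k ih =>
      have hDk : D (k+1) = D k + (φ (p k) - φ (q k)) := Finset.sum_range_succ _ k
      have hSk : S (k+1) = S k + (p k - q k) := Finset.sum_range_succ _ k
      rcases lt_trichotomy (p k) (q k) with hlt | heq | hgt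
      · -- p k < q k
        rcases ih with h1 | ⟨j, hjk, hqpj, hDle⟩
        · -- would make S (k+1) < 0, contradiction
          exfalso
          have hS0 : S k = 0 := by
            simp only [hS]
            apply Finset.sum_eq_zero
            intro i hi
            rw [h1 i (Finset.mem_range.mp hi)]
            ring
          have := hSnn (k+1)
          rw [hSk, hS0] at this
          linarith
        · refine Or.inr ⟨j, Nat.lt_succ_of_lt hjk, hqpj, ?_⟩
          have hcle : sl (q j) (p j) ≤ sl (p k) (q k) := by
            apply concave_slope_le_slope hφ (hp k) (hq k) (hq j) (hp j) hlt hqpj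
            · exact le_trans (le_of_lt hlt) (hqa (le_of_lt hjk))
            · exact le_trans ((hqa (le_of_lt hjk))) (le_of_lt hqpj)
          have hterm : φ (p k) - φ (q k) = sl (p k) (q k) * (p k - q k) := by
            have hne : q k - p k ≠ 0 := by linarith
            rw [hsl]; dsimp only; rw [div_mul_eq_mul_div, eq_div_iff hne]
            ring
          have : φ (p k) - φ (q k) ≤ sl (q j) (p j) * (p k - q k) := by
            rw [hterm]
            apply mul_le_mul_of_nonpos_right hcle
            linarith
          rw [hDk, hSk, mul_add]
          linarith
      · -- p k = q k
        rcases ih with h1 | ⟨j, hjk, hqpj, hDle⟩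
        · exact Or.inl (fun i hi => by
            rcases Nat.lt_succ_iff_lt_or_eq.mp hi with h | h
            · exact h1 i h
            · rw [h]; exact heq)
        · refine Or.inr ⟨j, Nat.lt_succ_of_lt hjk, hqpj, ?_⟩
          rw [hDk, hSk, heq]
          simp only [sub_self, add_zero]
          linarith [hDle]
      · -- q k < p k
        refine Or.inr ⟨k, Nat.lt_succ_self k, hgt, ?_⟩
        have hterm : φ (p k) - φ (q k) = sl (q k) (p k) * (p k - q k) := by
          have hne : p k - q k ≠ 0 := by linarith
          rw [hsl]; dsimp only; rw [div_mul_eq_mul_div, eq_div_iff hne]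
        rcases ih with h1 | ⟨j, hjk, hqpj, hDle⟩
        · have hD0 : D k = 0 := by
            simp only [hD]
            apply Finset.sum_eq_zero
            intro i hi
            rw [h1 i (Finset.mem_range.mp hi)]
            ring
          have hS0 : S k = 0 := by
            simp only [hS]
            apply Finset.sum_eq_zero
            intro i hi
            rw [h1 i (Finset.mem_range.mp hi)]
            ring
          rw [hDk, hSk, hD0, hS0, zero_add, zero_add, hterm]
        · have hcle : sl (q j) (p j) ≤ sl (q k) (p k) := by
            apply concave_slope_le_slope hφ (hq k) (hp k) (hq j) (hp j) hgt hqpj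
            · exact hqa (le_of_lt hjk)
            · exact hpa (le_of_lt hjk)
          rw [hDk, hSk, mul_add, hterm]
          have : sl (q j) (p j) * S k ≤ sl (q k) (p k) * S k :=
            mul_le_mul_of_nonneg_right hcle (hSnn k)
          linarith
  -- Tail bound: D k ≤ max 0 (tail of φ ∘ q)
  have key : ∀ k, D k ≤ max 0 (∑' i, φ (q (i + k))) := by
    intro k
    rcases claim k with h1 | ⟨j, hjk, hqpj, hDle⟩
    · have : D k = 0 := by
        simp only [hD]
        apply Finset.sum_eq_zero
        intro i hi
        rw [h1 i (Finset.mem_range.mp hi)]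
        ring
      rw [this]
      exact le_max_left _ _
    · set c := sl (q j) (p j) with hc
      rcases le_or_gt c 0 with hcn | hcp
      · have : c * S k ≤ 0 := mul_nonpos_of_nonpos_of_nonneg hcn (hSnn k)
        exact le_trans hDle (le_trans this (le_max_left _ _))
      · -- c > 0 : bound via tail of q
        have hqksum : Summable (fun i => q (i + k)) := (summable_nat_add_iff k).mpr hqs
        have hpksum : Summable (fun i => p (i + k)) := (summable_nat_add_iff k).mpr hps
        have hφqksum : Summable (fun i => φ (q (i + k))) := (summable_nat_add_iff k).mpr hsq
        have hSbound : S k ≤ ∑' i, q (i + k) := by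
          have hpeq : ∑ i ∈ Finset.range k, p i + ∑' i, p (i + k) = ∑' i, p i :=
            Summable.sum_add_tsum_nat_add k hps
          have hqeq : ∑ i ∈ Finset.range k, q i + ∑' i, q (i + k) = ∑' i, q i :=
            Summable.sum_add_tsum_nat_add k hqs
          have hptail : 0 ≤ ∑' i, p (i + k) := tsum_nonneg fun i => (hp (i + k)).1
          simp only [hS, Finset.sum_sub_distrib]
          linarith
        have hterm : ∀ i, c * q (i + k) ≤ φ (q (i + k)) := by
          intro i
          rcases eq_or_lt_of_le (hq (i + k)).1 with h0 | h0
          · rw [← h0, mul_zero, hφ0]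
          · -- 0 < q (i+k)
            have hle : q (i + k) ≤ q j := hqa (by omega)
            have hcle : c ≤ (φ (q (i + k)) - φ 0) / (q (i + k) - 0) := by
              rw [hc]
              apply concave_slope_le_slope hφ (Set.mem_Icc.mpr ⟨le_refl 0, zero_le_one⟩)
                (hq (i + k)) (hq j) (hp j) h0 hqpj (hq j).1
                (le_trans hle (le_of_lt hqpj))
            rw [hφ0, sub_zero, sub_zero] at hcle
            calc c * q (i + k) ≤ (φ (q (i + k)) / q (i + k)) * q (i + k) :=
                  mul_le_mul_of_nonneg_right hcle (le_of_lt h0)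
              _ = φ (q (i + k)) := div_mul_cancel₀ _ (ne_of_gt h0)
        have : c * S k ≤ ∑' i, φ (q (i + k)) := by
          calc c * S k ≤ c * ∑' i, q (i + k) :=
                mul_le_mul_of_nonneg_left hSbound (le_of_lt hcp)
            _ = ∑' i, c * q (i + k) := (tsum_mul_left).symm
            _ ≤ ∑' i, φ (q (i + k)) := Summable.tsum_le_tsum hterm (hqksum.mul_left c) hφqksum
        exact le_trans hDle (le_trans this (le_max_right _ _))
  -- Pass to the limit
  have hDlim : Filter.Tendsto D Filter.atTop (nhds (∑' i, φ (p i) - ∑' i, φ (q i))) := by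
    have hsum : Summable (fun i => φ (p i) - φ (q i)) := hsp.sub hsq
    have h1 := hsum.hasSum.tendsto_sum_nat
    have h2 : ∑' i, (φ (p i) - φ (q i)) = ∑' i, φ (p i) - ∑' i, φ (q i) :=
      Summable.tsum_sub hsp hsq
    rwa [h2] at h1
  have hMlim : Filter.Tendsto (fun k => max 0 (∑' i, φ (q (i + k)))) Filter.atTop (nhds 0) := by
    have ht : Filter.Tendsto (fun k => ∑' i, φ (q (i + k))) Filter.atTop (nhds 0) :=
      tendsto_sum_nat_add (fun i => φ (q i))
    have := (Filter.Tendsto.max (tendsto_const_nhds (x := (0:ℝ))) ht)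
    simpa using this
  have hfinal : ∑' i, φ (p i) - ∑' i, φ (q i) ≤ 0 :=
    le_of_tendsto_of_tendsto' hDlim hMlim key
  linarith
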